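/- Let m and n be distinct nonzero rational numbers. If nonzero rationals x, y satisfy x + m/x = y + n/y, then setting u = x*y and w = (m/x - y)*x*y, the point (u, w) satisfies w^2 = u*(u - m)*(u - n). -/

import Mathlib

theorem stmt2 (m n x y u w : ℚ) (hmn : m ≠ n) (hm : m ≠ 0) (hn : n ≠ 0)
    (hx : x ≠ 0) (hy : y ≠ 0) (h : x + m / x = y + n / y)
    (hu : u = x * y) (hw : w = (m / x - y) * x * y) :
    w ^ 2 = u * (u - m) * (u - n) := by
  subst hu hw
  field_simp at h ⊢
  linear_combination (m - x*y) * h
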